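/- Every infinite Hausdorff topological space has an infinite cellular family, i.e., an infinite family of pairwise disjoint nonempty open sets. -/

import Mathlib

/-- From any infinite open set in an infinite T2 space we can split off a nonempty open
set and a disjoint infinite open set, both inside it. -/
lemma cellular_step {X : Type*} [TopologicalSpace X] [T2Space X]
    (S : Set X) (hSo : IsOpen S) (hSi : S.Infinite) :
    ∃ U V : Set X, IsOpen U ∧ U.Nonempty ∧ IsOpen V ∧ V.Infinite ∧
      Disjoint U V ∧ U ⊆ S ∧ V ⊆ S := by
  obtain ⟨x, hx, y, hy, hxy⟩ := hSi.nontrivial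
  obtain ⟨u, v, hu, hv, hxu, hyv, huv⟩ := t2_separation hxy
  by_cases hV : (v ∩ S).Infinite
  · exact ⟨u ∩ S, v ∩ S, hu.inter hSo, ⟨x, hxu, hx⟩, hv.inter hSo, hV,
      (huv.mono Set.inter_subset_left Set.inter_subset_left),
      Set.inter_subset_right, Set.inter_subset_right⟩
  · -- v ∩ S finite, so {y} is open
    rw [Set.not_infinite] at hV
    have hfin : ((v ∩ S) \ {y}).Finite := hV.diff
    have hyopen : IsOpen ({y} : Set X) := by
      have : ({y} : Set X) = (v ∩ S) ∩ ((v ∩ S) \ {y})ᶜ := by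
        ext z
        simp only [Set.mem_singleton_iff, Set.mem_inter_iff, Set.mem_compl_iff,
          Set.mem_diff, not_and, not_not]
        constructor
        · rintro rfl; exact ⟨⟨hyv, hy⟩, fun _ => rfl⟩
        · rintro ⟨hz, h⟩; exact h hz
      rw [this]
      exact (hv.inter hSo).inter hfin.isClosed.isOpen_compl
    refine ⟨{y}, S \ {y}, hyopen, ⟨y, rfl⟩, hSo.sdiff isClosed_singleton,
      hSi.diff (Set.finite_singleton y), ?_, Set.singleton_subset_iff.2 hy,
      Set.diff_subset⟩
    exact Set.disjoint_left.2 (by rintro z rfl hz; exact hz.2 rfl)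

theorem infinite_hausdorff_has_infinite_cellular_family
    (X : Type*) [TopologicalSpace X] [T2Space X] [Infinite X] :
    ∃ C : Set (Set X), C.Infinite ∧ (∀ u ∈ C, IsOpen u ∧ u.Nonempty) ∧
      C.PairwiseDisjoint id := by
  have key := fun (S : Set X) (h1 : IsOpen S) (h2 : S.Infinite) =>
    cellular_step S h1 h2
  choose! U V hUo hUne hVo hVi hd hUS hVS using key
  set W : ℕ → Set X := fun n => V^[n] Set.univ with hW
  have hWinv : ∀ n, IsOpen (W n) ∧ (W n).Infinite := by
    intro n
    induction n with
    | zero => exact ⟨isOpen_univ, Set.infinite_univ⟩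
    | succ n ih =>
      have : W (n + 1) = V (W n) := Function.iterate_succ_apply' V n Set.univ
      rw [this]
      exact ⟨hVo _ ih.1 ih.2, hVi _ ih.1 ih.2⟩
  have hWmono : ∀ n, W (n + 1) ⊆ W n := by
    intro n
    have : W (n + 1) = V (W n) := Function.iterate_succ_apply' V n Set.univ
    rw [this]
    exact hVS _ (hWinv n).1 (hWinv n).2
  have hWle : ∀ m n, m ≤ n → W n ⊆ W m := by
    intro m n h
    induction n with
    | zero => simp_all
    | succ n ih =>
      rcases Nat.lt_or_ge m (n + 1) with h' | h'
      · exact (hWmono n).trans (ih (Nat.lt_succ_iff.mp h'))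
      · have : m = n + 1 := le_antisymm h h'
        subst this; exact subset_rfl
  set f : ℕ → Set X := fun n => U (W n) with hf
  have hfo : ∀ n, IsOpen (f n) := fun n => hUo _ (hWinv n).1 (hWinv n).2
  have hfne : ∀ n, (f n).Nonempty := fun n => hUne _ (hWinv n).1 (hWinv n).2
  have hfsub : ∀ n, f n ⊆ W n := fun n => hUS _ (hWinv n).1 (hWinv n).2
  have hdis : ∀ m n, m < n → Disjoint (f m) (f n) := by
    intro m n hmn
    have h1 : f n ⊆ W n := hfsub n
    have h2 : W n ⊆ W (m + 1) := hWle (m + 1) n hmn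
    have h3 : W (m + 1) = V (W m) := Function.iterate_succ_apply' V m Set.univ
    have h4 : Disjoint (f m) (V (W m)) := hd _ (hWinv m).1 (hWinv m).2
    exact h4.mono_right (h3 ▸ (h1.trans h2))
  have hinj : Function.Injective f := by
    intro m n h
    by_contra hne
    obtain ⟨x, hx⟩ := hfne m
    rcases Nat.lt_or_ge m n with h' | h'
    · exact Set.disjoint_left.1 (hdis m n h') hx (h ▸ hx)
    · have h'' : n < m := lt_of_le_of_ne h' (Ne.symm hne)
      exact Set.disjoint_left.1 (hdis n m h'') (h ▸ hx) hx
  refine ⟨Set.range f, Set.infinite_range_of_injective hinj, ?_, ?_⟩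
  · rintro u ⟨n, rfl⟩; exact ⟨hfo n, hfne n⟩
  · rintro u ⟨m, rfl⟩ v ⟨n, rfl⟩ hne
    rcases Nat.lt_or_ge m n with h | h
    · exact hdis m n h
    · have hnm : n < m := lt_of_le_of_ne h (fun e => hne (by rw [e]))
      exact (hdis n m hnm).symm
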